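/- For ν > 0, ρ > 0, the Mellin transform of the Krätzel probability density f̃^ν_ρ(x) := (ρ / Γ((ν+1)/ρ)) Z^ν_ρ(x) 1_{(0,∞)}(x), where Z^ν_ρ(u) := ∫_0^∞ λ^{ν−1} e^{−u/λ} e^{−λ^ρ} dλ, is given for Re s > 0 by M[f̃^ν_ρ](s) := ∫_0^∞ f̃^ν_ρ(t) t^{s−1} dt = Γ(s) Γ((s+ν)/ρ) / Γ((ν+1)/ρ). -/

import Mathlib

open MeasureTheory Set Complex

lemma integral_ofReal'' {X : Type*} [MeasurableSpace X] {μ : Measure X} {f : X → ℝ} :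
    ∫ x, ((f x : ℝ) : ℂ) ∂μ = ((∫ x, f x ∂μ : ℝ) : ℂ) :=
  integral_ofReal

lemma aux_int_t {σ l : ℝ} (hσ : 0 < σ) (hl : 0 < l) :
    IntegrableOn (fun t : ℝ => t ^ (σ - 1) * Real.exp (-(t / l))) (Set.Ioi 0) := by
  have h := integrableOn_rpow_mul_exp_neg_mul_rpow (p := 1) (s := σ - 1) (b := 1/l)
    (by linarith) zero_lt_one (by positivity)
  refine h.congr_fun (fun t ht => ?_) measurableSet_Ioi
  dsimp only
  rw [Real.rpow_one, neg_mul, one_div, inv_mul_eq_div]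

lemma aux_val_t_real {σ l : ℝ} (hσ : 0 < σ) (hl : 0 < l) :
    ∫ t in Set.Ioi (0:ℝ), t ^ (σ - 1) * Real.exp (-(t / l)) = l ^ σ * Real.Gamma σ := by
  have h := Real.integral_rpow_mul_exp_neg_mul_Ioi (a := σ) (r := 1/l) hσ (by positivity)
  rw [one_div_one_div] at h
  rw [← h]
  refine setIntegral_congr_fun measurableSet_Ioi (fun t ht => ?_)
  rw [one_div, inv_mul_eq_div]

lemma aux_int_t_c {s : ℂ} (hs : 0 < s.re) {l : ℝ} (hl : 0 < l) :
    IntegrableOn (fun t : ℝ => (t:ℂ) ^ (s - 1) * Real.exp (-(t / l))) (Set.Ioi 0) := by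
  constructor
  · refine ContinuousOn.aestronglyMeasurable ?_ measurableSet_Ioi
    refine ContinuousOn.mul (continuousOn_of_forall_continuousAt fun x hx =>
      Complex.continuousAt_ofReal_cpow_const x (s-1) (Or.inr (ne_of_gt hx))) ?_
    exact (Complex.continuous_ofReal.comp
      (Real.continuous_exp.comp (continuous_id.div_const l).neg)).continuousOn
  · rw [← hasFiniteIntegral_norm_iff]
    refine ((aux_int_t hs hl).2).congr ?_
    refine (ae_restrict_iff' measurableSet_Ioi).mpr ?_
    filter_upwards with t ht
    rw [norm_mul, Complex.norm_real, Real.norm_of_nonneg (Real.exp_pos _).le,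
      Complex.norm_cpow_eq_rpow_re_of_pos ht, Complex.sub_re,
      Complex.one_re]

lemma aux_val_t {s : ℂ} (hs : 0 < s.re) {l : ℝ} (hl : 0 < l) :
    ∫ t in Set.Ioi (0:ℝ), (t:ℂ) ^ (s - 1) * Real.exp (-(t / l))
      = (l:ℂ) ^ s * Complex.Gamma s := by
  have h := integral_cpow_mul_exp_neg_mul_Ioi (a := s) (r := 1/l) hs (by positivity)
  have h2 : ((1:ℂ) / ((1/l : ℝ) : ℂ)) = (l : ℂ) := by
    push_cast
    rw [one_div_one_div]
  rw [h2] at h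
  rw [← h]
  refine setIntegral_congr_fun measurableSet_Ioi (fun t ht => ?_)
  push_cast [Complex.ofReal_exp]
  rw [one_div, inv_mul_eq_div]

lemma aux_int_l {ρ q : ℝ} (hρ : 0 < ρ) (hq : -1 < q) :
    IntegrableOn (fun l : ℝ => l ^ q * Real.exp (-(l ^ ρ))) (Set.Ioi 0) := by
  have hne : (1/ρ) ≠ 0 := by positivity
  rw [← integrableOn_Ioi_comp_rpow_iff _ hne]
  have h0 : IntegrableOn (fun x : ℝ => (1/ρ) * (Real.exp (-x) * x ^ ((q+1)/ρ - 1)))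
      (Set.Ioi 0) :=
    (Real.GammaIntegral_convergent (div_pos (by linarith) hρ)).const_mul _
  refine h0.congr_fun (fun x hx => ?_) measurableSet_Ioi
  have hx0 : (0:ℝ) < x := hx
  rw [smul_eq_mul, ← Real.rpow_mul hx0.le (1/ρ) ρ, one_div_mul_cancel hρ.ne', Real.rpow_one,
    ← Real.rpow_mul hx0.le (1/ρ) q, abs_of_pos (show (0:ℝ) < 1/ρ by positivity),
    show (q+1)/ρ - 1 = (1/ρ - 1) + 1/ρ * q by field_simp; ring]
  dsimp only
  rw [Real.rpow_add hx0]
  ring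

lemma aux_val_l {ρ : ℝ} (hρ : 0 < ρ) {w : ℂ} (hw : 0 < w.re) :
    ∫ l in Set.Ioi (0:ℝ), (l:ℂ) ^ (w - 1) * Real.exp (-(l ^ ρ))
      = (1/(ρ:ℂ)) * Complex.Gamma (w / ρ) := by
  have hne : (1/ρ) ≠ 0 := by positivity
  have hsub := integral_comp_rpow_Ioi
    (fun l : ℝ => (l:ℂ) ^ (w - 1) * (Real.exp (-(l ^ ρ)) : ℂ)) hne
  rw [← hsub]
  have hre : 0 < (w / (ρ:ℂ)).re := by
    rw [Complex.div_ofReal_re]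
    positivity
  have hΓ := integral_cpow_mul_exp_neg_mul_Ioi (a := w / ρ) hre one_pos
  simp only [one_mul, Complex.ofReal_one, one_div, inv_one, Complex.one_cpow] at hΓ
  rw [← hΓ, ← integral_const_mul]
  refine setIntegral_congr_fun measurableSet_Ioi (fun x hx => ?_)
  have hx0 : (0:ℝ) < x := hx
  have hxne : (x:ℂ) ≠ 0 := Complex.ofReal_ne_zero.mpr hx0.ne'
  have hρc : (ρ:ℂ) ≠ 0 := Complex.ofReal_ne_zero.mpr hρ.ne'
  have h2 : (x ^ (1/ρ) : ℝ) ^ ρ = x := by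
    rw [← Real.rpow_mul hx0.le, one_div_mul_cancel hρ.ne', Real.rpow_one]
  have h1 : ((x ^ (1/ρ) : ℝ) : ℂ) ^ (w - 1) = (x:ℂ) ^ ((↑(1/ρ) : ℂ) * (w - 1)) :=
    (Complex.cpow_mul_ofReal_nonneg hx0.le (1/ρ) (w-1)).symm
  rw [h2, h1, real_smul, abs_of_pos (show (0:ℝ) < 1/ρ by positivity)]
  push_cast [Complex.ofReal_exp, Complex.ofReal_cpow hx0.le]
  have hkey : (x:ℂ) ^ (1/(ρ:ℂ) - 1) * (x:ℂ) ^ ((1/(ρ:ℂ)) * (w - 1))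
      = (x:ℂ) ^ (w/(ρ:ℂ) - 1) := by
    rw [← Complex.cpow_add _ _ hxne]
    congr 1
    field_simp
    ring
  rw [← hkey]
  ring

/-- The Krätzel function `Z^ν_ρ(u) = ∫_0^∞ λ^{ν-1} e^{-u/λ} e^{-λ^ρ} dλ`. -/
noncomputable def kraetzel (ν ρ u : ℝ) : ℝ :=
  ∫ l in Set.Ioi (0:ℝ), l ^ (ν - 1) * Real.exp (-(u / l)) * Real.exp (-(l ^ ρ))

/-- The Krätzel probability density `f̃^ν_ρ(x) = (ρ / Γ((ν+1)/ρ)) Z^ν_ρ(x) 1_{(0,∞)}(x)`. -/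
noncomputable def kraetzelPDF (ν ρ x : ℝ) : ℝ :=
  if 0 < x then ρ / Real.Gamma ((ν + 1) / ρ) * kraetzel ν ρ x else 0

/-- Mellin transform of the Krätzel density:
`M[f̃^ν_ρ](s) = Γ(s) Γ((s+ν)/ρ) / Γ((ν+1)/ρ)` for `Re s > 0`. -/
theorem statement19 (ν ρ : ℝ) (hν : 0 < ν) (hρ : 0 < ρ) :
    ∀ s : ℂ, 0 < s.re →
      (∫ t in Set.Ioi (0:ℝ), (kraetzelPDF ν ρ t : ℂ) * (t : ℂ) ^ (s - 1)) =
        Complex.Gamma s * Complex.Gamma ((s + ν) / ρ) / Complex.Gamma (((ν : ℂ) + 1) / ρ) := by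
  intro s hs
  have hΓrpos : 0 < Real.Gamma ((ν + 1) / ρ) := Real.Gamma_pos_of_pos (by positivity)
  set c : ℝ := ρ / Real.Gamma ((ν + 1) / ρ) with hc
  set F : ℝ → ℝ → ℂ := fun t l =>
    ((l ^ (ν - 1) * Real.exp (-(t / l)) * Real.exp (-(l ^ ρ)) : ℝ) : ℂ) * (t:ℂ) ^ (s - 1)
    with hF
  have hmeas : AEStronglyMeasurable (Function.uncurry F)
      ((volume.restrict (Set.Ioi (0:ℝ))).prod (volume.restrict (Set.Ioi (0:ℝ)))) := by
    rw [Measure.prod_restrict]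
    refine ContinuousOn.aestronglyMeasurable ?_ (measurableSet_Ioi.prod measurableSet_Ioi)
    have h1 : ContinuousOn (fun p : ℝ × ℝ => p.2 ^ (ν - 1))
        (Set.Ioi (0:ℝ) ×ˢ Set.Ioi (0:ℝ)) :=
      ContinuousOn.rpow_const continuous_snd.continuousOn
        (fun p hp => Or.inl (ne_of_gt hp.2))
    have h2 : ContinuousOn (fun p : ℝ × ℝ => Real.exp (-(p.1 / p.2)))
        (Set.Ioi (0:ℝ) ×ˢ Set.Ioi (0:ℝ)) :=
      Real.continuous_exp.comp_continuousOn
        ((continuous_fst.continuousOn.div continuous_snd.continuousOn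
          (fun p hp => ne_of_gt hp.2)).neg)
    have h3 : ContinuousOn (fun p : ℝ × ℝ => Real.exp (-(p.2 ^ ρ)))
        (Set.Ioi (0:ℝ) ×ˢ Set.Ioi (0:ℝ)) :=
      Real.continuous_exp.comp_continuousOn
        ((ContinuousOn.rpow_const continuous_snd.continuousOn
          (fun p hp => Or.inl (ne_of_gt hp.2))).neg)
    have h4 : ContinuousOn (fun p : ℝ × ℝ => ((p.1 : ℂ)) ^ (s - 1))
        (Set.Ioi (0:ℝ) ×ˢ Set.Ioi (0:ℝ)) := by
      refine continuousOn_of_forall_continuousAt fun p hp => ?_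
      exact (Complex.continuousAt_ofReal_cpow_const p.1 (s-1)
        (Or.inr (ne_of_gt hp.1))).comp continuous_fst.continuousAt
    exact (Complex.continuous_ofReal.comp_continuousOn ((h1.mul h2).mul h3)).mul h4
  have hint : Integrable (Function.uncurry F)
      ((volume.restrict (Set.Ioi (0:ℝ))).prod (volume.restrict (Set.Ioi (0:ℝ)))) := by
    rw [integrable_prod_iff' hmeas]
    constructor
    · refine (ae_restrict_iff' measurableSet_Ioi).mpr
        (Filter.Eventually.of_forall fun l hl => ?_)
      have hl0 : (0:ℝ) < l := hl
      have hbase := (aux_int_t_c hs hl0).const_mul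
        ((l ^ (ν - 1) * Real.exp (-(l ^ ρ)) : ℝ) : ℂ)
      refine hbase.congr (Filter.Eventually.of_forall fun t => ?_)
      simp only [Function.uncurry, hF]
      push_cast
      ring
    · have hq : -1 < s.re + ν - 1 := by linarith
      have hbig : IntegrableOn
          (fun l : ℝ => Real.Gamma s.re * (l ^ (s.re + ν - 1) * Real.exp (-(l ^ ρ))))
          (Set.Ioi 0) := (aux_int_l hρ hq).const_mul _
      refine hbig.congr ((ae_restrict_iff' measurableSet_Ioi).mpr
        (Filter.Eventually.of_forall fun l hl => ?_))
      have hl0 : (0:ℝ) < l := hl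
      calc Real.Gamma s.re * (l ^ (s.re + ν - 1) * Real.exp (-(l ^ ρ)))
          = (l ^ (ν - 1) * Real.exp (-(l ^ ρ))) * (l ^ s.re * Real.Gamma s.re) := by
            rw [show s.re + ν - 1 = s.re + (ν - 1) by ring, Real.rpow_add hl0]
            ring
        _ = ∫ t in Set.Ioi (0:ℝ),
              (l ^ (ν - 1) * Real.exp (-(l ^ ρ))) * (t ^ (s.re - 1) * Real.exp (-(t / l))) := by
            rw [integral_const_mul, aux_val_t_real hs hl0]
        _ = ∫ t in Set.Ioi (0:ℝ), ‖Function.uncurry F (t, l)‖ := by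
            refine setIntegral_congr_fun measurableSet_Ioi fun t ht => ?_
            have ht0 : (0:ℝ) < t := ht
            simp only [Function.uncurry, hF, norm_mul, Complex.norm_real,
              Complex.norm_cpow_eq_rpow_re_of_pos ht0,
              Complex.sub_re, Complex.one_re]
            rw [Real.norm_of_nonneg (by positivity : (0:ℝ) ≤ l ^ (ν - 1)),
              Real.norm_of_nonneg (Real.exp_pos _).le, Real.norm_of_nonneg (Real.exp_pos _).le]
            ring
  calc ∫ t in Set.Ioi (0:ℝ), (kraetzelPDF ν ρ t : ℂ) * (t : ℂ) ^ (s - 1)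
      = ∫ t in Set.Ioi (0:ℝ), (c:ℂ) * ∫ l in Set.Ioi (0:ℝ), F t l := by
        refine setIntegral_congr_fun measurableSet_Ioi fun t ht => ?_
        have ht0 : (0:ℝ) < t := ht
        rw [kraetzelPDF, if_pos ht0, ← hc, kraetzel, Complex.ofReal_mul, mul_assoc]
        congr 1
        rw [← integral_ofReal'', ← integral_mul_const]
      _ = (c:ℂ) * ∫ t in Set.Ioi (0:ℝ), ∫ l in Set.Ioi (0:ℝ), F t l := integral_const_mul _ _
      _ = (c:ℂ) * ∫ l in Set.Ioi (0:ℝ), ∫ t in Set.Ioi (0:ℝ), F t l := by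
        rw [integral_integral_swap hint]
      _ = (c:ℂ) * ∫ l in Set.Ioi (0:ℝ),
            ((l ^ (ν - 1) * Real.exp (-(l ^ ρ)) : ℝ) : ℂ) * ((l:ℂ) ^ s * Complex.Gamma s) := by
        congr 1
        refine setIntegral_congr_fun measurableSet_Ioi fun l hl => ?_
        have hl0 : (0:ℝ) < l := hl
        calc ∫ t in Set.Ioi (0:ℝ), F t l
            = ∫ t in Set.Ioi (0:ℝ), ((l ^ (ν - 1) * Real.exp (-(l ^ ρ)) : ℝ) : ℂ) *
                ((t:ℂ) ^ (s - 1) * Real.exp (-(t / l))) := by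
              refine setIntegral_congr_fun measurableSet_Ioi fun t ht => ?_
              simp only [hF]
              push_cast
              ring
          _ = _ := by rw [integral_const_mul, aux_val_t hs hl0]
      _ = (c:ℂ) * (Complex.Gamma s *
            ∫ l in Set.Ioi (0:ℝ), (l:ℂ) ^ (s + (ν:ℂ) - 1) * Real.exp (-(l ^ ρ))) := by
        congr 1
        rw [← integral_const_mul]
        refine setIntegral_congr_fun measurableSet_Ioi fun l hl => ?_
        have hl0 : (0:ℝ) < l := hl
        have hlne : (l:ℂ) ≠ 0 := Complex.ofReal_ne_zero.mpr hl0.ne'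
        rw [show s + (ν:ℂ) - 1 = ((ν - 1 : ℝ) : ℂ) + s by push_cast; ring,
          Complex.cpow_add _ _ hlne, ← Complex.ofReal_cpow hl0.le]
        push_cast
        ring
      _ = Complex.Gamma s * Complex.Gamma ((s + ν) / ρ) / Complex.Gamma (((ν:ℂ) + 1) / ρ) := by
        have hre : 0 < (s + (ν:ℂ)).re := by
          rw [Complex.add_re, Complex.ofReal_re]
          positivity
        rw [aux_val_l hρ hre]
        have hΓeq : ((Real.Gamma ((ν + 1) / ρ) : ℝ) : ℂ) = Complex.Gamma (((ν:ℂ) + 1) / ρ) := by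
          rw [← Complex.Gamma_ofReal]
          norm_cast
        have hρc : (ρ:ℂ) ≠ 0 := Complex.ofReal_ne_zero.mpr hρ.ne'
        have hΓc : Complex.Gamma (((ν:ℂ) + 1) / ρ) ≠ 0 := by
          rw [← hΓeq]
          exact_mod_cast hΓrpos.ne'
        rw [hc]
        push_cast
        rw [hΓeq]
        field_simp
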